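/- In the setting of the quiver presentation theorem for Gr(X), for all vertices ᵢx, ⱼy of Q' and every path μ from ᵢx to ⱼy in Q', there exist a morphism a ∈ I(i,j) and an element ν ∈ kQ^{(j)}(ⱼ(ax), ⱼy) such that in kQ'/⟨R'⟩ the class of μ equals the class of ν·π(a, ᵢx). (Normal form: every path can be rewritten to move all transport arrows to the right.) -/

import Mathlib

open CategoryTheory Quiver Finsupp
open scoped Classical

noncomputable section

def pcomp {W : Type} [Quiver.{0} W] {k : Type} [Field k] {x y z : W}
    (f : Quiver.Path x y →₀ k) (g : Quiver.Path y z →₀ k) : Quiver.Path x z →₀ k :=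
  f.sum fun p fp => g.sum fun q gq => Finsupp.single (p.comp q) (gq * fp)

def pathsRel {V : Type} [Quiver.{0} V]
    (R : ∀ ⦃i j : V⦄, Quiver.Path i j → Quiver.Path i j → Prop) : HomRel (Paths V) :=
  fun {_ _} p q => R p q

def PresCat {V : Type} [Quiver.{0} V]
    (R : ∀ ⦃i j : V⦄, Quiver.Path i j → Quiver.Path i j → Prop) : Type :=
  CategoryTheory.Quotient (pathsRel R)

noncomputable instance {V : Type} [Quiver.{0} V]
    (R : ∀ ⦃i j : V⦄, Quiver.Path i j → Quiver.Path i j → Prop) : Category (PresCat R) :=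
  inferInstanceAs (Category (CategoryTheory.Quotient (pathsRel R)))

def presObj {V : Type} [Quiver.{0} V]
    (R : ∀ ⦃i j : V⦄, Quiver.Path i j → Quiver.Path i j → Prop) (i : V) : PresCat R := ⟨i⟩

variable {k : Type} [Field k] {V : Type} [Quiver.{0} V]
variable {W : V → Type} [∀ i, Quiver.{0} (W i)]

def RIdeal (Ri : ∀ (i : V) ⦃x y : W i⦄, (Quiver.Path x y →₀ k) → Prop)
    (i : V) (x y : W i) : Submodule k (Quiver.Path x y →₀ k) :=
  Submodule.span k
    {f | ∃ (x' y' : W i) (α : Quiver.Path x x') (r : Quiver.Path x' y' →₀ k)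
      (β : Quiver.Path y' y),
      Ri i r ∧ f = pcomp (Finsupp.single α 1) (pcomp r (Finsupp.single β 1))}

abbrev XH (Ri : ∀ (i : V) ⦃x y : W i⦄, (Quiver.Path x y →₀ k) → Prop)
    (i : V) (x y : W i) : Type :=
  (Quiver.Path x y →₀ k) ⧸ RIdeal Ri i x y

variable (Ri : ∀ (i : V) ⦃x y : W i⦄, (Quiver.Path x y →₀ k) → Prop)

def qcomp {i : V} {x y z : W i} (f : XH Ri i x y) (g : XH Ri i y z) :
    XH Ri i x z :=
  Submodule.Quotient.mk (pcomp (Quotient.out f) (Quotient.out g))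

variable (fobj : ∀ ⦃i j : V⦄, (i ⟶ j) → W i → W j)

def pobj {i j : V} (p : Quiver.Path i j) (x : W i) : W j :=
  Quiver.Path.rec (motive := fun b _ => W b) x (fun _ e ih => fobj e ih) p

variable (fhomQ : ∀ ⦃i j : V⦄ (a : i ⟶ j) ⦃x y : W i⦄,
  XH Ri i x y →ₗ[k] XH Ri j (fobj a x) (fobj a y))

def phomQ {i j : V} (p : Quiver.Path i j) {x y : W i} :
    XH Ri i x y →ₗ[k] XH Ri j (pobj fobj p x) (pobj fobj p y) :=
  Quiver.Path.rec
    (motive := fun b q =>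
      XH Ri i x y →ₗ[k] XH Ri b (pobj fobj q x) (pobj fobj q y))
    LinearMap.id (fun _ e ih => (fhomQ e).comp ih) p

/-- The new arrows of the quiver `Q'`. -/
inductive QArr : (Σ i : V, W i) → (Σ i : V, W i) → Type where
  | inner : ∀ {i : V} {x y : W i}, (x ⟶ y) → QArr ⟨i, x⟩ ⟨i, y⟩
  | trans : ∀ {i j : V} (a : i ⟶ j) (x : W i), QArr ⟨i, x⟩ ⟨j, fobj a x⟩

/-- Paths of the quiver `Q'`. -/
inductive QPath : (Σ i : V, W i) → (Σ i : V, W i) → Type where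
  | nil : ∀ u, QPath u u
  | cons : ∀ {u v w}, QPath u v → QArr fobj v w → QPath u w

/-- Concatenation of paths of `Q'`. -/
def qpComp {u v w : Σ i : V, W i} (p : QPath fobj u v) (q : QPath fobj v w) :
    QPath fobj u w :=
  QPath.rec (motive := fun w' _ => QPath fobj u w')
    p (fun _ a ih => QPath.cons ih a) q

/-- Convolution composition in `kQ'`. -/
def kpcomp {u v w : Σ i : V, W i}
    (f : QPath fobj u v →₀ k) (g : QPath fobj v w →₀ k) :
    QPath fobj u w →₀ k :=
  f.sum fun p fp => g.sum fun q gq => Finsupp.single (qpComp fobj p q) (gq * fp)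

/-- The embedding of paths of `Q⁽ⁱ⁾` as paths of inner arrows in `Q'`. -/
def innerPath {i : V} {x y : W i} (p : Quiver.Path x y) :
    QPath fobj ⟨i, x⟩ ⟨i, y⟩ :=
  Quiver.Path.rec (motive := fun b _ => QPath fobj ⟨i, x⟩ ⟨i, b⟩)
    (QPath.nil _) (fun _ e ih => QPath.cons ih (QArr.inner e)) p

/-- The embedding `σ⁽ⁱ⁾ : kQ⁽ⁱ⁾ → kQ'`. -/
def sigmaMap {i : V} {x y : W i} (f : Quiver.Path x y →₀ k) :
    QPath fobj ⟨i, x⟩ ⟨i, y⟩ →₀ k :=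
  Finsupp.mapDomain (innerPath fobj) f

/-- The path `π(a, ᵢx)` of transport arrows in `Q'` lifting a path `a` of `Q`. -/
def piPath {i j : V} (p : Quiver.Path i j) (x : W i) :
    QPath fobj ⟨i, x⟩ ⟨j, pobj fobj p x⟩ :=
  Quiver.Path.rec (motive := fun b q => QPath fobj ⟨i, x⟩ ⟨b, pobj fobj q x⟩)
    (QPath.nil _) (fun q e ih => QPath.cons ih (QArr.trans e (pobj fobj q x))) p

/-- Transport of a path of `Q'` along an equality of its target vertex. -/
def castQP {u : Σ i : V, W i} {j : V} {y y' : W j} (e : y = y')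
    (p : QPath fobj u ⟨j, y⟩) : QPath fobj u ⟨j, y'⟩ := by
  cases e; exact p

/-- Transport of a hom-class along equalities of objects. -/
def castXH {j : V} {u u' y y' : W j} (e : u = u') (e' : y = y')
    (f : XH Ri j u y) : XH Ri j u' y' := by
  cases e; cases e'; exact f

variable (R : ∀ ⦃i j : V⦄, Quiver.Path i j → Quiver.Path i j → Prop)
variable (lift : ∀ ⦃i j : V⦄ (a : i ⟶ j) ⦃x y : W i⦄ (α : x ⟶ y),
  Quiver.Path (fobj a x) (fobj a y) →₀ k)

/-- The relations `R' = R'₁ ∪ R'₂ ∪ R'₃` on `kQ'`. -/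
inductive RelR' : ∀ ⦃u v : Σ i : V, W i⦄, (QPath fobj u v →₀ k) → Prop where
  | r1 : ∀ {i : V} {x y : W i} (r : Quiver.Path x y →₀ k), Ri i r →
      RelR' (sigmaMap fobj r)
  | r2 : ∀ {i j : V} (g h : Quiver.Path i j), R g h → ∀ (x : W i)
      (e : pobj fobj h x = pobj fobj g x),
      RelR' (Finsupp.single (piPath fobj g x) 1
        - Finsupp.single (castQP fobj e (piPath fobj h x)) 1)
  | r3 : ∀ {i j : V} (a : i ⟶ j) {x y : W i} (α : x ⟶ y),
      RelR' (Finsupp.single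
          (QPath.cons (QPath.cons (QPath.nil ⟨i, x⟩) (QArr.inner α)) (QArr.trans a y)) 1
        - kpcomp fobj (Finsupp.single (QPath.cons (QPath.nil ⟨i, x⟩) (QArr.trans a x)) 1)
            (sigmaMap fobj (lift a α)))

/-- The ideal `⟨R'⟩` of `kQ'`. -/
def IdR' (u v : Σ i : V, W i) : Submodule k (QPath fobj u v →₀ k) :=
  Submodule.span k
    {f | ∃ (u' v' : Σ i : V, W i) (α : QPath fobj u u')
      (g : QPath fobj u' v' →₀ k) (β : QPath fobj v' v),
      RelR' Ri fobj R lift g ∧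
        f = kpcomp fobj (Finsupp.single α 1) (kpcomp fobj g (Finsupp.single β 1))}

end

noncomputable section
variable {k : Type} [Field k] {V : Type} [Quiver.{0} V]
variable {W : V → Type} [∀ i, Quiver.{0} (W i)]
variable (Ri : ∀ (i : V) ⦃x y : W i⦄, (Quiver.Path x y →₀ k) → Prop)
variable (R : ∀ ⦃i j : V⦄, Quiver.Path i j → Quiver.Path i j → Prop)
variable (fobj : ∀ ⦃i j : V⦄, (i ⟶ j) → W i → W j)
variable (fhomQ : ∀ ⦃i j : V⦄ (a : i ⟶ j) ⦃x y : W i⦄,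
  XH Ri i x y →ₗ[k] XH Ri j (fobj a x) (fobj a y))

/-- The hom-sets `I(i,j)` of the presented category `I = ⟨Q ∣ R⟩`. -/
abbrev IHom (i j : V) : Type := presObj R i ⟶ presObj R j

/-- Action of a morphism of `I` on objects (via a representative path). -/
def XobjI {i j : V} (a : IHom R i j) (x : W i) : W j := pobj fobj (Quot.out a) x

/-- Hom-modules of the Grothendieck construction:
`Gr(X)((i,x),(j,y)) = ⨁_{a ∈ I(i,j)} X(j)(X(a)x, y)`. -/
abbrev GrH (i : V) (x : W i) (j : V) (y : W j) : Type :=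
  DirectSum (IHom R i j) (fun a => XH Ri j (XobjI R fobj a x) y)

/-- The identity of `Gr(X)` at `(i,x)`. -/
def grId (i : V) (x : W i)
    (hid : XobjI R fobj (𝟙 (presObj R i)) x = x) : GrH Ri R fobj i x i x :=
  DirectSum.of (fun a => XH Ri i (XobjI R fobj a x) x) (𝟙 (presObj R i))
    (castXH Ri hid.symm rfl
      (Submodule.Quotient.mk (Finsupp.single Quiver.Path.nil 1)))

/-- Composition in `Gr(X)`: `(g ∘ f)_c = ∑_{c = b∘a} g_b · X(b)(f_a)`. -/
def grcomp
    (hX : ∀ (i j l : V) (a : IHom R i j) (b : IHom R j l) (x : W i),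
      XobjI R fobj (a ≫ b) x = XobjI R fobj b (XobjI R fobj a x))
    {i : V} {x : W i} {j : V} {y : W j} {l : V} {z : W l}
    (f : GrH Ri R fobj i x j y) (g : GrH Ri R fobj j y l z) :
    GrH Ri R fobj i x l z :=
  DFinsupp.sum f fun a fa => DFinsupp.sum g fun b gb =>
    DirectSum.of (fun c => XH Ri l (XobjI R fobj c x) z) (a ≫ b)
      (castXH Ri (hX i j l a b x).symm rfl
        (qcomp Ri (phomQ Ri fobj fhomQ (Quot.out b) fa) gb))

end


noncomputable section NormalFormProof

variable {k : Type} [Field k] {V : Type} [Quiver.{0} V]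
variable {W : V → Type} [∀ i, Quiver.{0} (W i)]
variable (fobj : ∀ ⦃i j : V⦄, (i ⟶ j) → W i → W j)

/-! ### Basic path lemmas -/

@[simp] lemma qpComp_nil {u v : Σ i : V, W i} (p : QPath fobj u v) :
    qpComp fobj p (QPath.nil v) = p := rfl

@[simp] lemma qpComp_cons {u v w w' : Σ i : V, W i} (p : QPath fobj u v)
    (q : QPath fobj v w) (a : QArr fobj w w') :
    qpComp fobj p (QPath.cons q a) = QPath.cons (qpComp fobj p q) a := rfl

@[simp] lemma qpComp_nil_left {u v : Σ i : V, W i} (p : QPath fobj u v) :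
    qpComp fobj (QPath.nil u) p = p := by
  induction p with
  | nil => rfl
  | cons q a ih => rw [qpComp_cons, ih]

lemma qpComp_assoc {t u v w : Σ i : V, W i} (p : QPath fobj t u)
    (q : QPath fobj u v) (r : QPath fobj v w) :
    qpComp fobj (qpComp fobj p q) r = qpComp fobj p (qpComp fobj q r) := by
  induction r with
  | nil => rfl
  | cons r a ih => rw [qpComp_cons, qpComp_cons, qpComp_cons, ih]

@[simp] lemma innerPath_nil {i : V} {x : W i} :
    innerPath fobj (Quiver.Path.nil : Quiver.Path x x) = QPath.nil ⟨i, x⟩ := rfl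

@[simp] lemma innerPath_cons {i : V} {x y z : W i} (p : Quiver.Path x y) (α : y ⟶ z) :
    innerPath fobj (p.cons α) = QPath.cons (innerPath fobj p) (QArr.inner α) := rfl

@[simp] lemma pobj_nil {i : V} (x : W i) :
    pobj fobj (Quiver.Path.nil : Quiver.Path i i) x = x := rfl

@[simp] lemma pobj_cons {i j l : V} (p : Quiver.Path i j) (e : j ⟶ l) (x : W i) :
    pobj fobj (p.cons e) x = fobj e (pobj fobj p x) := rfl

@[simp] lemma piPath_nil {i : V} (x : W i) :
    piPath fobj (Quiver.Path.nil : Quiver.Path i i) x = QPath.nil ⟨i, x⟩ := rfl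

@[simp] lemma piPath_cons {i j l : V} (p : Quiver.Path i j) (e : j ⟶ l) (x : W i) :
    piPath fobj (p.cons e) x
      = QPath.cons (piPath fobj p x) (QArr.trans e (pobj fobj p x)) := rfl

lemma innerPath_comp {i : V} {x y z : W i} (p : Quiver.Path x y) (q : Quiver.Path y z) :
    innerPath fobj (p.comp q) = qpComp fobj (innerPath fobj p) (innerPath fobj q) := by
  induction q with
  | nil => rfl
  | cons q α ih =>
      show QPath.cons (innerPath fobj (p.comp q)) (QArr.inner α) = _
      rw [ih]; rfl

/-! ### `kpcomp` lemmas -/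

lemma kpcomp_single_single {u v w : Σ i : V, W i} (p : QPath fobj u v)
    (q : QPath fobj v w) (c d : k) :
    kpcomp fobj (Finsupp.single p c) (Finsupp.single q d)
      = Finsupp.single (qpComp fobj p q) (d * c) := by
  unfold kpcomp
  rw [Finsupp.sum_single_index (by simp), Finsupp.sum_single_index (by simp)]

@[simp] lemma kpcomp_zero_left {u v w : Σ i : V, W i} (g : QPath fobj v w →₀ k) :
    kpcomp fobj (0 : QPath fobj u v →₀ k) g = 0 := by
  simp [kpcomp]

@[simp] lemma kpcomp_zero_right {u v w : Σ i : V, W i} (f : QPath fobj u v →₀ k) :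
    kpcomp fobj f (0 : QPath fobj v w →₀ k) = 0 := by
  simp [kpcomp]

lemma kpcomp_add_left {u v w : Σ i : V, W i} (f f' : QPath fobj u v →₀ k)
    (g : QPath fobj v w →₀ k) :
    kpcomp fobj (f + f') g = kpcomp fobj f g + kpcomp fobj f' g := by
  unfold kpcomp
  refine Finsupp.sum_add_index' (fun p => by simp) fun p b₁ b₂ => ?_
  rw [← Finsupp.sum_add]
  exact Finsupp.sum_congr fun q _ => by rw [mul_add, Finsupp.single_add]

lemma kpcomp_add_right {u v w : Σ i : V, W i} (f : QPath fobj u v →₀ k)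
    (g g' : QPath fobj v w →₀ k) :
    kpcomp fobj f (g + g') = kpcomp fobj f g + kpcomp fobj f g' := by
  unfold kpcomp
  rw [← Finsupp.sum_add]
  refine Finsupp.sum_congr fun p _ => ?_
  exact Finsupp.sum_add_index' (fun q => by simp)
    fun q b₁ b₂ => by rw [add_mul, Finsupp.single_add]

lemma kpcomp_smul_left {u v w : Σ i : V, W i} (c : k) (f : QPath fobj u v →₀ k)
    (g : QPath fobj v w →₀ k) :
    kpcomp fobj (c • f) g = c • kpcomp fobj f g := by
  unfold kpcomp
  rw [Finsupp.sum_smul_index (fun p => by simp), Finsupp.smul_sum]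
  refine Finsupp.sum_congr fun p _ => ?_
  rw [Finsupp.smul_sum]
  exact Finsupp.sum_congr fun q _ => by
    rw [Finsupp.smul_single, smul_eq_mul, mul_left_comm]

lemma kpcomp_smul_right {u v w : Σ i : V, W i} (c : k) (f : QPath fobj u v →₀ k)
    (g : QPath fobj v w →₀ k) :
    kpcomp fobj f (c • g) = c • kpcomp fobj f g := by
  unfold kpcomp
  rw [Finsupp.smul_sum]
  refine Finsupp.sum_congr fun p _ => ?_
  rw [Finsupp.sum_smul_index (fun q => by simp), Finsupp.smul_sum]
  exact Finsupp.sum_congr fun q _ => by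
    rw [Finsupp.smul_single, smul_eq_mul, mul_assoc]

lemma kpcomp_sub_left {u v w : Σ i : V, W i} (f f' : QPath fobj u v →₀ k)
    (g : QPath fobj v w →₀ k) :
    kpcomp fobj (f - f') g = kpcomp fobj f g - kpcomp fobj f' g := by
  rw [sub_eq_add_neg, kpcomp_add_left, ← neg_one_smul k f', kpcomp_smul_left,
    neg_one_smul, ← sub_eq_add_neg]

lemma kpcomp_sub_right {u v w : Σ i : V, W i} (f : QPath fobj u v →₀ k)
    (g g' : QPath fobj v w →₀ k) :
    kpcomp fobj f (g - g') = kpcomp fobj f g - kpcomp fobj f g' := by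
  rw [sub_eq_add_neg, kpcomp_add_right, ← neg_one_smul k g', kpcomp_smul_right,
    neg_one_smul, ← sub_eq_add_neg]

lemma kpcomp_assoc {t u v w : Σ i : V, W i} (f : QPath fobj t u →₀ k)
    (g : QPath fobj u v →₀ k) (h : QPath fobj v w →₀ k) :
    kpcomp fobj (kpcomp fobj f g) h = kpcomp fobj f (kpcomp fobj g h) := by
  induction f using Finsupp.induction_linear with
  | zero => simp
  | add f1 f2 ih1 ih2 => simp [kpcomp_add_left, ih1, ih2]
  | single p c =>
    induction g using Finsupp.induction_linear with
    | zero => simp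
    | add g1 g2 ih1 ih2 => simp [kpcomp_add_left, kpcomp_add_right, ih1, ih2]
    | single q d =>
      induction h using Finsupp.induction_linear with
      | zero => simp
      | add h1 h2 ih1 ih2 => simp [kpcomp_add_right, ih1, ih2]
      | single r e =>
          simp only [kpcomp_single_single]
          rw [qpComp_assoc, mul_assoc]

lemma kpcomp_nil_right {u v : Σ i : V, W i} (f : QPath fobj u v →₀ k) :
    kpcomp fobj f (Finsupp.single (QPath.nil v) 1) = f := by
  unfold kpcomp
  conv_rhs => rw [← Finsupp.sum_single f]
  refine Finsupp.sum_congr fun p _ => ?_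
  rw [Finsupp.sum_single_index (by simp)]
  simp

lemma kpcomp_nil_left {u v : Σ i : V, W i} (g : QPath fobj u v →₀ k) :
    kpcomp fobj (Finsupp.single (QPath.nil u) 1) g = g := by
  unfold kpcomp
  rw [Finsupp.sum_single_index (by simp)]
  conv_rhs => rw [← Finsupp.sum_single g]
  exact Finsupp.sum_congr fun q _ => by rw [qpComp_nil_left]; simp

/-! ### `pcomp` lemmas -/

lemma pcomp_single_single {Z : Type} [Quiver.{0} Z] {x y z : Z}
    (p : Quiver.Path x y) (q : Quiver.Path y z) (c d : k) :
    pcomp (Finsupp.single p c) (Finsupp.single q d)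
      = Finsupp.single (p.comp q) (d * c) := by
  unfold pcomp
  rw [Finsupp.sum_single_index (by simp), Finsupp.sum_single_index (by simp)]

@[simp] lemma pcomp_zero_left {Z : Type} [Quiver.{0} Z] {x y z : Z}
    (g : Quiver.Path y z →₀ k) :
    pcomp (0 : Quiver.Path x y →₀ k) g = 0 := by
  simp [pcomp]

@[simp] lemma pcomp_zero_right {Z : Type} [Quiver.{0} Z] {x y z : Z}
    (f : Quiver.Path x y →₀ k) :
    pcomp f (0 : Quiver.Path y z →₀ k) = 0 := by
  simp [pcomp]

lemma pcomp_add_left {Z : Type} [Quiver.{0} Z] {x y z : Z}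
    (f f' : Quiver.Path x y →₀ k) (g : Quiver.Path y z →₀ k) :
    pcomp (f + f') g = pcomp f g + pcomp f' g := by
  unfold pcomp
  refine Finsupp.sum_add_index' (fun p => by simp) fun p b₁ b₂ => ?_
  rw [← Finsupp.sum_add]
  exact Finsupp.sum_congr fun q _ => by rw [mul_add, Finsupp.single_add]

lemma pcomp_add_right {Z : Type} [Quiver.{0} Z] {x y z : Z}
    (f : Quiver.Path x y →₀ k) (g g' : Quiver.Path y z →₀ k) :
    pcomp f (g + g') = pcomp f g + pcomp f g' := by
  unfold pcomp
  rw [← Finsupp.sum_add]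
  refine Finsupp.sum_congr fun p _ => ?_
  exact Finsupp.sum_add_index' (fun q => by simp)
    fun q b₁ b₂ => by rw [add_mul, Finsupp.single_add]

/-! ### `sigmaMap` lemmas -/

lemma sigmaMap_single {i : V} {x y : W i} (p : Quiver.Path x y) (c : k) :
    sigmaMap fobj (Finsupp.single p c) = Finsupp.single (innerPath fobj p) c :=
  Finsupp.mapDomain_single

@[simp] lemma sigmaMap_zero {i : V} {x y : W i} :
    sigmaMap fobj (0 : Quiver.Path x y →₀ k) = 0 :=
  Finsupp.mapDomain_zero

lemma sigmaMap_add {i : V} {x y : W i} (f g : Quiver.Path x y →₀ k) :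
    sigmaMap fobj (f + g) = sigmaMap fobj f + sigmaMap fobj g :=
  Finsupp.mapDomain_add

lemma sigmaMap_smul {i : V} {x y : W i} (c : k) (f : Quiver.Path x y →₀ k) :
    sigmaMap fobj (c • f) = c • sigmaMap fobj f :=
  Finsupp.mapDomain_smul c f

lemma sigmaMap_pcomp {i : V} {x y z : W i} (f : Quiver.Path x y →₀ k)
    (g : Quiver.Path y z →₀ k) :
    sigmaMap fobj (pcomp f g) = kpcomp fobj (sigmaMap fobj f) (sigmaMap fobj g) := by
  induction f using Finsupp.induction_linear with
  | zero => simp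
  | add f1 f2 ih1 ih2 => simp [pcomp_add_left, sigmaMap_add, kpcomp_add_left, ih1, ih2]
  | single p c =>
    induction g using Finsupp.induction_linear with
    | zero => simp
    | add g1 g2 ih1 ih2 => simp [pcomp_add_right, sigmaMap_add, kpcomp_add_right, ih1, ih2]
    | single q d =>
        rw [pcomp_single_single, sigmaMap_single, sigmaMap_single, sigmaMap_single,
          kpcomp_single_single, innerPath_comp]

/-! ### Ideal membership lemmas -/

variable (Ri : ∀ (i : V) ⦃x y : W i⦄, (Quiver.Path x y →₀ k) → Prop)
variable (R : ∀ ⦃i j : V⦄, Quiver.Path i j → Quiver.Path i j → Prop)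
variable (lift : ∀ ⦃i j : V⦄ (a : i ⟶ j) ⦃x y : W i⦄ (α : x ⟶ y),
  Quiver.Path (fobj a x) (fobj a y) →₀ k)

lemma gen_mem {u v u' v' : Σ i : V, W i} (γ : QPath fobj u u')
    {g : QPath fobj u' v' →₀ k} (hg : RelR' Ri fobj R lift g) (β : QPath fobj v' v) :
    kpcomp fobj (Finsupp.single γ 1) (kpcomp fobj g (Finsupp.single β 1))
      ∈ IdR' Ri fobj R lift u v :=
  Submodule.subset_span ⟨u', v', γ, g, β, hg, rfl⟩

lemma mem_kpcomp_left {u v t : Σ i : V, W i} {f : QPath fobj u v →₀ k}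
    (hf : f ∈ IdR' Ri fobj R lift u v) (h : QPath fobj t u →₀ k) :
    kpcomp fobj h f ∈ IdR' Ri fobj R lift t v := by
  induction h using Finsupp.induction_linear with
  | zero => rw [kpcomp_zero_left]; exact zero_mem _
  | add h1 h2 ih1 ih2 => rw [kpcomp_add_left]; exact add_mem ih1 ih2
  | single γ c =>
    have hc : Finsupp.single γ c = c • Finsupp.single γ (1 : k) := by
      rw [Finsupp.smul_single, smul_eq_mul, mul_one]
    rw [hc, kpcomp_smul_left]
    refine Submodule.smul_mem _ _ ?_
    induction hf using Submodule.span_induction with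
    | mem x hx =>
        obtain ⟨u', v', α, g, β, hg, rfl⟩ := hx
        rw [← kpcomp_assoc, kpcomp_single_single, one_mul]
        exact gen_mem fobj Ri R lift _ hg _
    | zero => rw [kpcomp_zero_right]; exact zero_mem _
    | add x y hx hy ihx ihy => rw [kpcomp_add_right]; exact add_mem ihx ihy
    | smul c' x hx ihx => rw [kpcomp_smul_right]; exact Submodule.smul_mem _ _ ihx

lemma mem_kpcomp_right {u v w : Σ i : V, W i} {f : QPath fobj u v →₀ k}
    (hf : f ∈ IdR' Ri fobj R lift u v) (h : QPath fobj v w →₀ k) :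
    kpcomp fobj f h ∈ IdR' Ri fobj R lift u w := by
  induction h using Finsupp.induction_linear with
  | zero => rw [kpcomp_zero_right]; exact zero_mem _
  | add h1 h2 ih1 ih2 => rw [kpcomp_add_right]; exact add_mem ih1 ih2
  | single δ c =>
    have hc : Finsupp.single δ c = c • Finsupp.single δ (1 : k) := by
      rw [Finsupp.smul_single, smul_eq_mul, mul_one]
    rw [hc, kpcomp_smul_right]
    refine Submodule.smul_mem _ _ ?_
    induction hf using Submodule.span_induction with
    | mem x hx =>
        obtain ⟨u', v', α, g, β, hg, rfl⟩ := hx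
        rw [kpcomp_assoc, kpcomp_assoc, kpcomp_single_single, one_mul]
        exact gen_mem fobj Ri R lift _ hg _
    | zero => rw [kpcomp_zero_left]; exact zero_mem _
    | add x y hx hy ihx ihy => rw [kpcomp_add_left]; exact add_mem ihx ihy
    | smul c' x hx ihx => rw [kpcomp_smul_left]; exact Submodule.smul_mem _ _ ihx

lemma mk_kpcomp_congr_left {u v w : Σ i : V, W i} {f f' : QPath fobj u v →₀ k}
    (h : (Submodule.Quotient.mk f : _ ⧸ IdR' Ri fobj R lift u v)
        = Submodule.Quotient.mk f')
    (g : QPath fobj v w →₀ k) :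
    (Submodule.Quotient.mk (kpcomp fobj f g) : _ ⧸ IdR' Ri fobj R lift u w)
      = Submodule.Quotient.mk (kpcomp fobj f' g) := by
  rw [Submodule.Quotient.eq] at h ⊢
  rw [← kpcomp_sub_left]
  exact mem_kpcomp_right fobj Ri R lift h g

lemma mk_kpcomp_congr_right {u v w : Σ i : V, W i} {g g' : QPath fobj v w →₀ k}
    (h : (Submodule.Quotient.mk g : _ ⧸ IdR' Ri fobj R lift v w)
        = Submodule.Quotient.mk g')
    (f : QPath fobj u v →₀ k) :
    (Submodule.Quotient.mk (kpcomp fobj f g) : _ ⧸ IdR' Ri fobj R lift u w)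
      = Submodule.Quotient.mk (kpcomp fobj f g') := by
  rw [Submodule.Quotient.eq] at h ⊢
  rw [← kpcomp_sub_right]
  exact mem_kpcomp_left fobj Ri R lift h f

/-! ### Lifting paths along a transport arrow -/

def liftPath {i j : V} (a : i ⟶ j) :
    ∀ {x y : W i}, Quiver.Path x y → (Quiver.Path (fobj a x) (fobj a y) →₀ k)
  | _, _, Quiver.Path.nil => Finsupp.single Quiver.Path.nil 1
  | _, _, Quiver.Path.cons q α => pcomp (liftPath a q) (lift a α)

@[simp] lemma liftPath_nil {i j : V} (a : i ⟶ j) (x : W i) :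
    liftPath fobj lift a (Quiver.Path.nil : Quiver.Path x x)
      = Finsupp.single Quiver.Path.nil 1 := by simp only [liftPath]

@[simp] lemma liftPath_cons {i j : V} (a : i ⟶ j) {x y z : W i}
    (q : Quiver.Path x y) (α : y ⟶ z) :
    liftPath fobj lift a (q.cons α) = pcomp (liftPath fobj lift a q) (lift a α) := by
  simp only [liftPath]

def liftF {i j : V} (a : i ⟶ j) {x y : W i} (ν : Quiver.Path x y →₀ k) :
    Quiver.Path (fobj a x) (fobj a y) →₀ k :=
  ν.sum fun q c => c • liftPath fobj lift a q

@[simp] lemma liftF_zero {i j : V} (a : i ⟶ j) {x y : W i} :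
    liftF fobj lift a (0 : Quiver.Path x y →₀ k) = 0 :=
  Finsupp.sum_zero_index

lemma liftF_add {i j : V} (a : i ⟶ j) {x y : W i} (f g : Quiver.Path x y →₀ k) :
    liftF fobj lift a (f + g) = liftF fobj lift a f + liftF fobj lift a g :=
  Finsupp.sum_add_index' (fun q => by simp) (fun q b₁ b₂ => add_smul _ _ _)

lemma liftF_single {i j : V} (a : i ⟶ j) {x y : W i} (q : Quiver.Path x y) (c : k) :
    liftF fobj lift a (Finsupp.single q c) = c • liftPath fobj lift a q :=
  Finsupp.sum_single_index (by simp)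

/-! ### The key commutation lemma -/

lemma key_trans {i₀ j₀ : V} (a₀ : i₀ ⟶ j₀) {u v : W i₀} (q : Quiver.Path u v) :
    Finsupp.single (qpComp fobj (innerPath fobj q)
        (QPath.cons (QPath.nil ⟨i₀, v⟩) (QArr.trans a₀ v))) (1 : k)
      - kpcomp fobj
          (Finsupp.single (QPath.cons (QPath.nil ⟨i₀, u⟩) (QArr.trans a₀ u)) 1)
          (sigmaMap fobj (liftPath fobj lift a₀ q))
      ∈ IdR' Ri fobj R lift ⟨i₀, u⟩ ⟨j₀, fobj a₀ v⟩ := by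
  induction q with
  | nil =>
      rw [liftPath_nil, sigmaMap_single, kpcomp_single_single]
      simpa using zero_mem _
  | cons q' α ih =>
      rename_i b c
      -- abbreviations
      set Tb : QPath fobj ⟨i₀, b⟩ ⟨j₀, fobj a₀ b⟩ →₀ k :=
        Finsupp.single (QPath.cons (QPath.nil ⟨i₀, b⟩) (QArr.trans a₀ b)) 1 with hTb
      set Tu : QPath fobj ⟨i₀, u⟩ ⟨j₀, fobj a₀ u⟩ →₀ k :=
        Finsupp.single (QPath.cons (QPath.nil ⟨i₀, u⟩) (QArr.trans a₀ u)) 1 with hTu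
      set B1 : QPath fobj ⟨i₀, u⟩ ⟨j₀, fobj a₀ c⟩ →₀ k :=
        kpcomp fobj (Finsupp.single (innerPath fobj q') 1)
          (kpcomp fobj Tb (sigmaMap fobj (lift a₀ α))) with hB1
      have h1 : Finsupp.single (qpComp fobj (innerPath fobj (q'.cons α))
            (QPath.cons (QPath.nil ⟨i₀, c⟩) (QArr.trans a₀ c))) (1 : k)
          - B1 ∈ IdR' Ri fobj R lift ⟨i₀, u⟩ ⟨j₀, fobj a₀ c⟩ := by
        have hg := gen_mem fobj Ri R lift (innerPath fobj q')
          (RelR'.r3 (Ri := Ri) (R := R) a₀ α) (QPath.nil ⟨j₀, fobj a₀ c⟩)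
        rw [kpcomp_nil_right, kpcomp_sub_right, kpcomp_single_single] at hg
        simpa [hB1, hTb, one_mul] using hg
      have h2 : B1 - kpcomp fobj Tu
            (sigmaMap fobj (liftPath fobj lift a₀ (q'.cons α)))
          ∈ IdR' Ri fobj R lift ⟨i₀, u⟩ ⟨j₀, fobj a₀ c⟩ := by
        have hih := mem_kpcomp_right fobj Ri R lift ih (sigmaMap fobj (lift a₀ α))
        rw [kpcomp_sub_left] at hih
        have e1 : kpcomp fobj (Finsupp.single (qpComp fobj (innerPath fobj q')
              (QPath.cons (QPath.nil ⟨i₀, b⟩) (QArr.trans a₀ b))) (1 : k))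
            (sigmaMap fobj (lift a₀ α)) = B1 := by
          rw [hB1, ← kpcomp_assoc, kpcomp_single_single, one_mul]
        have e2 : kpcomp fobj (kpcomp fobj Tu
              (sigmaMap fobj (liftPath fobj lift a₀ q')))
            (sigmaMap fobj (lift a₀ α))
            = kpcomp fobj Tu (sigmaMap fobj (liftPath fobj lift a₀ (q'.cons α))) := by
          rw [kpcomp_assoc, liftPath_cons, sigmaMap_pcomp]
        rw [e1, e2] at hih
        exact hih
      have := add_mem h1 h2
      rwa [sub_add_sub_cancel] at this

lemma key_trans_F {i₀ j₀ : V} (a₀ : i₀ ⟶ j₀) {u v : W i₀} (ν : Quiver.Path u v →₀ k) :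
    kpcomp fobj (sigmaMap fobj ν)
        (Finsupp.single (QPath.cons (QPath.nil ⟨i₀, v⟩) (QArr.trans a₀ v)) 1)
      - kpcomp fobj
          (Finsupp.single (QPath.cons (QPath.nil ⟨i₀, u⟩) (QArr.trans a₀ u)) 1)
          (sigmaMap fobj (liftF fobj lift a₀ ν))
      ∈ IdR' Ri fobj R lift ⟨i₀, u⟩ ⟨j₀, fobj a₀ v⟩ := by
  induction ν using Finsupp.induction_linear with
  | zero => simpa using zero_mem _
  | add f g ihf ihg =>
      rw [sigmaMap_add, liftF_add, sigmaMap_add, kpcomp_add_left, kpcomp_add_right,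
        add_sub_add_comm]
      exact add_mem ihf ihg
  | single q c =>
      rw [liftF_single, sigmaMap_single, sigmaMap_smul, kpcomp_smul_right]
      have hc : Finsupp.single (innerPath fobj q) c
          = c • Finsupp.single (innerPath fobj q) (1 : k) := by
        rw [Finsupp.smul_single, smul_eq_mul, mul_one]
      rw [hc, kpcomp_smul_left, ← smul_sub]
      refine Submodule.smul_mem _ _ ?_
      rw [kpcomp_single_single, one_mul]
      exact key_trans fobj Ri R lift a₀ q

/-! ### The normal form theorem -/

lemma normal_form (u : Σ i : V, W i) :
    ∀ (v : Σ i : V, W i) (μ : QPath fobj u v),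
      ∃ (a : Quiver.Path u.1 v.1) (ν : Quiver.Path (pobj fobj a u.2) v.2 →₀ k),
        (Submodule.Quotient.mk (Finsupp.single μ 1)
            : (QPath fobj u v →₀ k) ⧸ IdR' Ri fobj R lift u v)
          = Submodule.Quotient.mk
              (kpcomp fobj (Finsupp.single (piPath fobj a u.2) 1)
                (sigmaMap fobj ν)) := by
  intro v μ
  induction μ with
  | nil =>
      refine ⟨Quiver.Path.nil, Finsupp.single Quiver.Path.nil 1, ?_⟩
      show (Submodule.Quotient.mk (Finsupp.single (QPath.nil u) 1)
          : _ ⧸ IdR' Ri fobj R lift u u) = Submodule.Quotient.mk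
            (kpcomp fobj (Finsupp.single (QPath.nil u) 1)
              (sigmaMap fobj (Finsupp.single (Quiver.Path.nil : Quiver.Path u.2 u.2) (1 : k))))
      rw [sigmaMap_single, kpcomp_single_single, one_mul]
      rfl
  | cons p arr ih =>
      cases arr with
      | inner α =>
          rename_i i₀ b c
          obtain ⟨a, ν, hiv⟩ := ih
          refine ⟨a, pcomp ν (Finsupp.single α.toPath 1), ?_⟩
          rw [sigmaMap_pcomp, ← kpcomp_assoc, sigmaMap_single]
          have h1 : Finsupp.single (QPath.cons p (QArr.inner α)) (1 : k)
              = kpcomp fobj (Finsupp.single p 1)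
                  (Finsupp.single (innerPath fobj α.toPath) 1) := by
            simp [kpcomp_single_single, Quiver.Hom.toPath]
          rw [h1]
          exact mk_kpcomp_congr_left fobj Ri R lift hiv _
      | trans a₀ x₀ =>
          rename_i i₀ j₀
          obtain ⟨a, ν, hiv⟩ := ih
          refine ⟨a.cons a₀, liftF fobj lift a₀ ν, ?_⟩
          have h1 : Finsupp.single (QPath.cons p (QArr.trans a₀ x₀)) (1 : k)
              = kpcomp fobj (Finsupp.single p 1)
                  (Finsupp.single (QPath.cons (QPath.nil ⟨i₀, x₀⟩)
                    (QArr.trans a₀ x₀)) 1) := by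
            simp [kpcomp_single_single]
          rw [h1]
          have step1 := mk_kpcomp_congr_left fobj Ri R lift hiv
            (Finsupp.single (QPath.cons (QPath.nil ⟨i₀, x₀⟩) (QArr.trans a₀ x₀)) 1)
          rw [step1, kpcomp_assoc]
          have step2 : (Submodule.Quotient.mk (kpcomp fobj (sigmaMap fobj ν)
                (Finsupp.single (QPath.cons (QPath.nil ⟨i₀, x₀⟩) (QArr.trans a₀ x₀)) 1))
              : _ ⧸ IdR' Ri fobj R lift ⟨i₀, pobj fobj a u.2⟩ ⟨j₀, fobj a₀ x₀⟩)
              = Submodule.Quotient.mk (kpcomp fobj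
                  (Finsupp.single (QPath.cons (QPath.nil ⟨i₀, pobj fobj a u.2⟩)
                    (QArr.trans a₀ (pobj fobj a u.2))) 1)
                  (sigmaMap fobj (liftF fobj lift a₀ ν))) := by
            rw [Submodule.Quotient.eq]
            exact key_trans_F fobj Ri R lift a₀ ν
          rw [mk_kpcomp_congr_right fobj Ri R lift step2
            (Finsupp.single (piPath fobj a u.2) 1), ← kpcomp_assoc,
            kpcomp_single_single, one_mul]
          rfl

end NormalFormProof


/-- (Normal form) Every path `μ : ᵢx → ⱼy` of `Q'` is, modulo
`⟨R'⟩`, of the form `ν ∘ π(a, ᵢx)` with `a ∈ I(i,j)` (represented by a path of `Q`)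
and `ν ∈ kQ⁽ʲ⁾(ⱼ(ax), ⱼy)`: all transport arrows can be moved to the right. -/
theorem stmt18 {k : Type} [Field k] {V : Type} [Quiver.{0} V]
    {W : V → Type} [∀ i, Quiver.{0} (W i)]
    (Ri : ∀ (i : V) ⦃x y : W i⦄, (Quiver.Path x y →₀ k) → Prop)
    (R : ∀ ⦃i j : V⦄, Quiver.Path i j → Quiver.Path i j → Prop)
    (fobj : ∀ ⦃i j : V⦄, (i ⟶ j) → W i → W j)
    (lift : ∀ ⦃i j : V⦄ (a : i ⟶ j) ⦃x y : W i⦄ (α : x ⟶ y),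
      Quiver.Path (fobj a x) (fobj a y) →₀ k) :
    ∀ (i : V) (x : W i) (j : V) (y : W j) (μ : QPath fobj ⟨i, x⟩ ⟨j, y⟩),
      ∃ (a : Quiver.Path i j) (ν : Quiver.Path (pobj fobj a x) y →₀ k),
        (Submodule.Quotient.mk (Finsupp.single μ 1)
            : (QPath fobj ⟨i, x⟩ ⟨j, y⟩ →₀ k) ⧸ IdR' Ri fobj R lift ⟨i, x⟩ ⟨j, y⟩)
          = Submodule.Quotient.mk
              (kpcomp fobj (Finsupp.single (piPath fobj a x) 1) (sigmaMap fobj ν)) := by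
  exact fun i x j y μ => normal_form fobj Ri R lift ⟨i, x⟩ ⟨j, y⟩ μ
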